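/- Let n ≥ 3, let a, b₁,...,bₙ, c ∈ ℝ with λ := Σᵢ bᵢ² − 4ac < 0. Then φ(x) = Σᵢ (a xᵢ² + bᵢ xᵢ) + c never vanishes on ℝⁿ, and (after replacing φ by −φ if necessary so that φ > 0) φ satisfies, with f := −λ/(2φ⁴), the system φ_{,xᵢxᵢ}/φ − |∇φ|²/(2φ²) = φ² f for every i and φ_{,xᵢxⱼ} = 0 for i ≠ j. -/

import Mathlib

noncomputable def pd {n : ℕ} (φ : (Fin n → ℝ) → ℝ) (i : Fin n) (x : Fin n → ℝ) : ℝ :=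
  fderiv ℝ φ x (Pi.single i 1)


lemma hasFDerivAt_phi {n : ℕ} (a c : ℝ) (b : Fin n → ℝ) (s : ℝ) (x : Fin n → ℝ) :
    HasFDerivAt (fun y : Fin n → ℝ => s * ((∑ i, (a * y i ^ 2 + b i * y i)) + c))
      (∑ k, (s * (2 * a * x k + b k)) • (ContinuousLinearMap.proj k : (Fin n → ℝ) →L[ℝ] ℝ)) x := by
  have h : ∀ k : Fin n, HasFDerivAt (fun y : Fin n → ℝ => s * (a * y k ^ 2 + b k * y k))
      ((s * (2 * a * x k + b k)) • (ContinuousLinearMap.proj k : (Fin n → ℝ) →L[ℝ] ℝ)) x := by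
    intro k
    have P : HasFDerivAt (fun y : Fin n → ℝ => y k)
        (ContinuousLinearMap.proj k : (Fin n → ℝ) →L[ℝ] ℝ) x :=
      (hasFDerivAt_apply k x)
    have h2 := (((P.mul P).const_mul a).add (P.const_mul (b k))).const_mul s
    have heq : (fun y : Fin n → ℝ => s * (a * y k ^ 2 + b k * y k))
        = fun y : Fin n → ℝ => s * (a * (y k * y k) + b k * y k) := by
      funext y; ring
    rw [heq]
    refine h2.congr_fderiv ?_
    ext v
    simp
    ring
  have h3 := (HasFDerivAt.fun_sum (fun k (_ : k ∈ Finset.univ) => h k)).add_const (s * c)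
  refine h3.congr_of_eventuallyEq (Filter.Eventually.of_forall fun y => ?_)
  · dsimp only
    rw [← Finset.mul_sum]
    ring

lemma pd_phi {n : ℕ} (a c : ℝ) (b : Fin n → ℝ) (s : ℝ) (i : Fin n) (x : Fin n → ℝ) :
    pd (fun y : Fin n → ℝ => s * ((∑ i, (a * y i ^ 2 + b i * y i)) + c)) i x
      = s * (2 * a * x i + b i) := by
  rw [pd, (hasFDerivAt_phi a c b s x).fderiv]
  simp [Pi.single_apply]

lemma pd_lin {n : ℕ} (r d : ℝ) (j i : Fin n) (x : Fin n → ℝ) :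
    pd (fun y : Fin n → ℝ => r * y j + d) i x = if j = i then r else 0 := by
  have P : HasFDerivAt (fun y : Fin n → ℝ => y j)
      (ContinuousLinearMap.proj j : (Fin n → ℝ) →L[ℝ] ℝ) x := hasFDerivAt_apply j x
  have h := (P.const_mul r).add_const d
  rw [pd, h.fderiv]
  simp [Pi.single_apply]

theorem stmt9 (n : ℕ) (hn : 3 ≤ n) (a c : ℝ) (b : Fin n → ℝ)
    (hlam : (∑ i, b i ^ 2) - 4 * a * c < 0)
    (φ : (Fin n → ℝ) → ℝ)
    (hφ : ∀ x, φ x = (∑ i, (a * x i ^ 2 + b i * x i)) + c) :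
    (∀ x, φ x ≠ 0) ∧
    ∃ s : ℝ, (s = 1 ∨ s = -1) ∧ (∀ x, 0 < s * φ x) ∧
      (∀ i : Fin n, ∀ x,
        pd (pd (fun y => s * φ y) i) i x / (s * φ x)
          - (∑ k, (pd (fun y => s * φ y) k x) ^ 2) / (2 * (s * φ x) ^ 2)
          = (s * φ x) ^ 2 *
            (-((∑ i, b i ^ 2) - 4 * a * c) / (2 * (s * φ x) ^ 4))) ∧
      (∀ i j : Fin n, i ≠ j → ∀ x, pd (pd (fun y => s * φ y) j) i x = 0) := by
  have hB : 0 ≤ ∑ i, b i ^ 2 := Finset.sum_nonneg fun i _ => sq_nonneg _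
  have ha : a ≠ 0 := by
    intro h0
    rw [h0] at hlam
    nlinarith
  set s : ℝ := if 0 < a then 1 else -1 with hsdef
  have hsa : s * a = |a| := by
    rcases lt_or_gt_of_ne ha with h | h
    · rw [hsdef, if_neg (not_lt.2 h.le), abs_of_neg h]; ring
    · rw [hsdef, if_pos h, abs_of_pos h]; ring
  have hs2 : s * s = 1 := by
    rw [hsdef]; split_ifs <;> norm_num
  have habs : 0 < |a| := abs_pos.2 ha
  -- positivity
  have hpos : ∀ x, 0 < s * φ x := by
    intro x
    have key : ∀ k : Fin n, 4 * |a| * (s * (a * x k ^ 2 + b k * x k))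
        = (2 * a * x k + b k) ^ 2 - (b k) ^ 2 := by
      intro k
      rw [← hsa]
      linear_combination (4 * (a ^ 2 * x k ^ 2 + a * b k * x k)) * hs2
    have e1 : s * φ x = (∑ k, s * (a * x k ^ 2 + b k * x k)) + s * c := by
      rw [hφ x, ← Finset.mul_sum]; ring
    have key2 : 4 * |a| * (s * φ x)
        = (∑ k, ((2 * a * x k + b k) ^ 2 - (b k) ^ 2)) + 4 * a * c := by
      rw [e1, mul_add, Finset.mul_sum]
      rw [Finset.sum_congr rfl fun k _ => key k]
      congr 1
      rw [← hsa]
      linear_combination (4 * a * c) * hs2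
    have hsq : 0 ≤ ∑ k, (2 * a * x k + b k) ^ 2 :=
      Finset.sum_nonneg fun k _ => sq_nonneg _
    rw [Finset.sum_sub_distrib] at key2
    nlinarith
  have hne : ∀ x, φ x ≠ 0 := by
    intro x h0
    have := hpos x
    rw [h0, mul_zero] at this
    exact lt_irrefl 0 this
  have hfe : (fun y => s * φ y)
      = fun y : Fin n → ℝ => s * ((∑ i, (a * y i ^ 2 + b i * y i)) + c) := by
    funext y; rw [hφ y]
  have hpd1 : ∀ (i : Fin n) x, pd (fun y => s * φ y) i x = s * (2 * a * x i + b i) := by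
    intro i x; rw [hfe]; exact pd_phi a c b s i x
  have hpd1f : ∀ i : Fin n, (pd (fun y => s * φ y) i)
      = fun x : Fin n → ℝ => (s * (2 * a)) * x i + s * b i := by
    intro i; funext x; rw [hpd1]; ring
  have hpd2 : ∀ (i j : Fin n) x, pd (pd (fun y => s * φ y) i) j x
      = if i = j then s * (2 * a) else 0 := by
    intro i j x; rw [hpd1f i]; exact pd_lin (s * (2 * a)) (s * b i) i j x
  refine ⟨hne, s, ?_, hpos, ?_, ?_⟩
  · rw [hsdef]; split_ifs <;> simp
  · intro i x
    have hx := hpos x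
    have hT : s * φ x ≠ 0 := ne_of_gt hx
    have K : ∑ k, (pd (fun y => s * φ y) k x) ^ 2
        = 4 * a * (s * (s * φ x)) + ((∑ k, b k ^ 2) - 4 * a * c) := by
      calc ∑ k, (pd (fun y => s * φ y) k x) ^ 2
          = ∑ k, (4 * a * (a * x k ^ 2 + b k * x k) + (b k) ^ 2) := by
            refine Finset.sum_congr rfl fun k _ => ?_
            rw [hpd1]
            linear_combination (4 * a * (a * x k ^ 2 + b k * x k) + (b k) ^ 2) * hs2
        _ = 4 * a * (∑ k, (a * x k ^ 2 + b k * x k)) + ∑ k, (b k) ^ 2 := by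
            rw [Finset.sum_add_distrib, ← Finset.mul_sum]
        _ = 4 * a * (s * (s * φ x)) + ((∑ k, b k ^ 2) - 4 * a * c) := by
            rw [hφ x]
            linear_combination (-(4 * a * ((∑ k, (a * x k ^ 2 + b k * x k)) + c))) * hs2
    rw [hpd2 i i x, if_pos rfl, K]
    field_simp
    ring
  · intro i j hij x
    rw [hpd2 j i x, if_neg (Ne.symm hij)]
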